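/- Let γ = arccos(1/3), θ₅ = 2π/5, and φ = (1+√5)/2. Then arctan( √(cos²(γ/2) − cos²(θ₅/2)) / (sin(γ/2)·cos(θ₅/2)) ) = arccos( φ² / √(2(φ+2)) ). -/

import Mathlib

theorem stmt6 (γ θ₅ φ : ℝ) (hγ : γ = Real.arccos (1 / 3))
    (hθ : θ₅ = 2 * Real.pi / 5) (hφ : φ = (1 + Real.sqrt 5) / 2) :
    Real.arctan (Real.sqrt (Real.cos (γ / 2) ^ 2 - Real.cos (θ₅ / 2) ^ 2)
        / (Real.sin (γ / 2) * Real.cos (θ₅ / 2)))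
      = Real.arccos (φ ^ 2 / Real.sqrt (2 * (φ + 2))) := by
  set s := Real.sqrt 5 with hsdef
  have hs : s ^ 2 = 5 := Real.sq_sqrt (by norm_num)
  have hs0 : 0 ≤ s := Real.sqrt_nonneg 5
  have hs2 : 2 < s := by nlinarith
  -- cos of θ₅/2
  have hcθ : Real.cos (θ₅ / 2) = (1 + s) / 4 := by
    rw [hθ, show 2 * Real.pi / 5 / 2 = Real.pi / 5 by ring, Real.cos_pi_div_five]
  -- facts about γ
  have hγ0 : 0 < γ := by rw [hγ]; exact Real.arccos_pos.2 (by norm_num)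
  have hγπ : γ ≤ Real.pi := hγ ▸ Real.arccos_le_pi _
  have hcosγ : Real.cos γ = 1 / 3 := by
    rw [hγ, Real.cos_arccos (by norm_num) (by norm_num)]
  have hc2 : Real.cos (γ / 2) ^ 2 = 2 / 3 := by
    have h := Real.cos_sq (γ / 2)
    rw [show 2 * (γ / 2) = γ by ring, hcosγ] at h
    linarith
  have hsinpos : 0 < Real.sin (γ / 2) :=
    Real.sin_pos_of_pos_of_lt_pi (by linarith) (by nlinarith [Real.pi_pos])
  have hsin2 : Real.sin (γ / 2) ^ 2 = 1 / 3 := by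
    have h := Real.sin_sq_add_cos_sq (γ / 2); linarith
  -- LHS
  have hDpos : 0 < Real.sin (γ / 2) * Real.cos (θ₅ / 2) := by
    rw [hcθ]; exact mul_pos hsinpos (by linarith)
  have hX : Real.cos (γ / 2) ^ 2 - Real.cos (θ₅ / 2) ^ 2
      = ((s - 2) * (Real.sin (γ / 2) * Real.cos (θ₅ / 2))) ^ 2 := by
    rw [hcθ, hc2]
    linear_combination (-(s ^ 2 - 2 * s + 5) / 48) * hs
      + (-((s - 2) ^ 2 * (1 + s) ^ 2 / 16)) * hsin2
  have hL : Real.sqrt (Real.cos (γ / 2) ^ 2 - Real.cos (θ₅ / 2) ^ 2)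
      / (Real.sin (γ / 2) * Real.cos (θ₅ / 2)) = s - 2 := by
    rw [hX, Real.sqrt_sq (mul_nonneg (by linarith) hDpos.le), mul_div_assoc, div_self hDpos.ne', mul_one]
  rw [hL]
  -- RHS
  set c := φ ^ 2 / Real.sqrt (2 * (φ + 2)) with hcdef
  have h2φ : 2 * (φ + 2) = 5 + s := by rw [hφ]; ring
  have h5s : (0:ℝ) < 5 + s := by linarith
  have hφpos : 0 < φ := by rw [hφ]; linarith
  have hcpos : 0 < c := by
    rw [hcdef, h2φ]
    exact div_pos (by positivity) (Real.sqrt_pos.2 h5s)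
  have hc2' : c ^ 2 = (7 + 3 * s) / (2 * (5 + s)) := by
    rw [hcdef, div_pow, h2φ, Real.sq_sqrt h5s.le, hφ]
    field_simp
    linear_combination (s^2 + 4*s + 11) * hs
  have h1c : 1 - c ^ 2 = ((s - 2) * c) ^ 2 := by
    have : ((s - 2) * c) ^ 2 = (s - 2) ^ 2 * c ^ 2 := by ring
    rw [this, hc2']
    field_simp
    linear_combination (-3*s + 5) * hs
  have hR : Real.sqrt (1 - c ^ 2) / c = s - 2 := by
    rw [h1c, Real.sqrt_sq (mul_nonneg (by linarith) hcpos.le), mul_div_assoc, div_self hcpos.ne', mul_one]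
  rw [Real.arccos_eq_arctan hcpos, hR]
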